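/- If an L-structure A is not existentially closed, then there exist a tuple ā of pairwise distinct elements of A and an extension diagram Δ in (x̄, ȳ), with x̄ of the same length as ā, such that A ⊨ ¬∃ȳ φ_Δ(ā, ȳ). -/

import Mathlib

open FirstOrder FirstOrder.Language

universe u v w

/-- A flat formula in the variables `V`: either `R(z̄)` (`pos = true`), `¬ R(z̄)`
(`pos = false`), or `f(z̄) = z'`.  Constant symbols are `0`-ary function symbols. -/
inductive FlatFormula (L : FirstOrder.Language.{v, w}) (V : Type u) where
  | rel {n : ℕ} (R : L.Relations n) (z : Fin n → V) (pos : Bool) : FlatFormula L V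
  | func {n : ℕ} (f : L.Functions n) (z : Fin n → V) (z' : V) : FlatFormula L V

/-- Realization of a flat formula in an `L`-structure `M` under an assignment `v : V → M`. -/
def FlatFormula.Realize {L : FirstOrder.Language.{v, w}} {V : Type u} {M : Type*}
    [L.Structure M] (v : V → M) : FlatFormula L V → Prop
  | .rel R z pos => (Structure.RelMap R (fun i => v (z i)) ↔ pos = true)
  | .func f z z' => Structure.funMap f (fun i => v (z i)) = v z'

/-- A flat diagram (a set of flat formulas) is consistent if no relation instance occurs both
positively and negatively, and each function symbol is assigned at most one value on each
tuple of variables. -/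
def FlatConsistent {L : FirstOrder.Language.{v, w}} {V : Type u}
    (Δ : Set (FlatFormula L V)) : Prop :=
  (∀ {n : ℕ} (R : L.Relations n) (z : Fin n → V),
      ¬ (FlatFormula.rel R z true ∈ Δ ∧ FlatFormula.rel R z false ∈ Δ)) ∧
  (∀ {n : ℕ} (f : L.Functions n) (z : Fin n → V) (z₁ z₂ : V),
      FlatFormula.func f z z₁ ∈ Δ → FlatFormula.func f z z₂ ∈ Δ → z₁ = z₂)

/-- A flat formula mentions a variable on the right of `α ⊕ β` (i.e. among the `ȳ`)
in its argument tuple. -/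
def FlatFormula.MentionsRight {L : FirstOrder.Language.{v, w}} {α β : Type u} :
    FlatFormula L (α ⊕ β) → Prop
  | .rel _ z _ => ∃ i, (z i).isRight
  | .func _ z _ => ∃ i, (z i).isRight

/-- An extension diagram in `(x̄, ȳ)` (with `x̄` indexed by `Fin m` and `ȳ` by `Fin n`):
a finite consistent flat diagram each of whose formulas mentions a variable among the `ȳ`. -/
def IsExtensionDiagram {L : FirstOrder.Language.{v, w}} {m n : ℕ}
    (Δ : Set (FlatFormula L (Fin m ⊕ Fin n))) : Prop :=
  Δ.Finite ∧ FlatConsistent Δ ∧ ∀ φ ∈ Δ, φ.MentionsRight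

/-- `M ⊨ φ_Δ(ā, b̄)`: all formulas of `Δ` hold under the assignment `Sum.elim a b`, and the
combined tuple `ā b̄` is non-redundant (its entries are pairwise distinct). -/
def RealizesExtDiagram {L : FirstOrder.Language.{v, w}} {m n : ℕ} {M : Type*} [L.Structure M]
    (Δ : Set (FlatFormula L (Fin m ⊕ Fin n))) (a : Fin m → M) (b : Fin n → M) : Prop :=
  (∀ φ ∈ Δ, FlatFormula.Realize (Sum.elim a b) φ) ∧ Function.Injective (Sum.elim a b)

/-- `M` is a model of `T^∅_L`: `M` satisfies the sentence
`ψ_Δ = ∀ x̄ (δ(x̄) → ∃ ȳ φ_Δ(x̄, ȳ))` for every extension diagram `Δ`. -/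
def ModelsTEmpty (L : FirstOrder.Language.{v, w}) (M : Type*) [L.Structure M] : Prop :=
  ∀ (m n : ℕ) (Δ : Set (FlatFormula L (Fin m ⊕ Fin n))), IsExtensionDiagram Δ →
    ∀ a : Fin m → M, Function.Injective a → ∃ b : Fin n → M, RealizesExtDiagram Δ a b

/-- An `L`-structure `A` is existentially closed if every existential quantifier-free
statement with parameters in `A` which holds in some extension of `A` already holds in `A`. -/
def IsExistentiallyClosed (L : FirstOrder.Language.{v, w}) (A : Type u) [L.Structure A] :
    Prop :=
  ∀ (B : Type (max u v w)) [L.Structure B] (g : A ↪[L] B)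
    (m n : ℕ) (φ : L.Formula (Fin m ⊕ Fin n)), φ.IsQF →
      ∀ a : Fin m → A,
        (∃ b : Fin n → B, φ.Realize (Sum.elim (fun i => g (a i)) b)) →
        ∃ b : Fin n → A, φ.Realize (Sum.elim a b)

/-- A bundled `L`-structure (used to quantify existentially over `L`-structures). -/
structure BStructure (L : FirstOrder.Language.{v, w}) : Type (max (u + 1) v w) where
  carrier : Type u
  [struc : L.Structure carrier]

attribute [instance] BStructure.struc

instance {L : FirstOrder.Language.{v, w}} : CoeSort (BStructure.{u} L) (Type u) :=
  ⟨BStructure.carrier⟩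

/-- All variables occurring in a flat formula lie in the set `S`. -/
def FlatFormula.VarsIn {L : FirstOrder.Language.{v, w}} {V : Type u} (S : Set V) :
    FlatFormula L V → Prop
  | .rel _ z _ => ∀ i, z i ∈ S
  | .func _ z z' => (∀ i, z i ∈ S) ∧ z' ∈ S

/-- `Δ` is a complete consistent flat diagram in the variables `S`. -/
def FlatCompleteOn {L : FirstOrder.Language.{v, w}} {V : Type u} (S : Set V)
    (Δ : Set (FlatFormula L V)) : Prop :=
  FlatConsistent Δ ∧ (∀ φ ∈ Δ, FlatFormula.VarsIn S φ) ∧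
  (∀ {n : ℕ} (R : L.Relations n) (z : Fin n → V), (∀ i, z i ∈ S) →
      (FlatFormula.rel R z true ∈ Δ ∨ FlatFormula.rel R z false ∈ Δ)) ∧
  (∀ {n : ℕ} (f : L.Functions n) (z : Fin n → V), (∀ i, z i ∈ S) →
      ∃ z' ∈ S, FlatFormula.func f z z' ∈ Δ)

section AuxFlat

open FirstOrder FirstOrder.Language

variable {L : FirstOrder.Language.{v, w}}

/-- The set of values of all subterms of a term. -/
def termVals {γ : Type*} {M : Type*} [L.Structure M] (v : γ → M) : L.Term γ → Set M
  | .var i => {v i}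
  | .func f ts =>
      insert (Structure.funMap f fun i => (ts i).realize v) (⋃ i, termVals v (ts i))

lemma termVals_finite {γ M : Type*} [L.Structure M] (v : γ → M) (t : L.Term γ) :
    (termVals v t).Finite := by
  induction t with
  | var i => exact Set.finite_singleton _
  | func f ts ih => exact (Set.finite_iUnion ih).insert _

lemma realize_mem_termVals {γ M : Type*} [L.Structure M] (v : γ → M) (t : L.Term γ) :
    t.realize v ∈ termVals v t := by
  cases t with
  | var i => simp [termVals, Term.realize]
  | func f ts => exact Set.mem_insert _ _

/-- The set of values of all terms occurring in a bounded formula. -/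
def bfVals {α : Type*} {M : Type*} [L.Structure M] (v : α → M) :
    ∀ {k : ℕ}, L.BoundedFormula α k → (Fin k → M) → Set M
  | _, .falsum, _ => ∅
  | _, .equal t₁ t₂, xs => termVals (Sum.elim v xs) t₁ ∪ termVals (Sum.elim v xs) t₂
  | _, .rel _ ts, xs => ⋃ i, termVals (Sum.elim v xs) (ts i)
  | _, .imp ψ₁ ψ₂, xs => bfVals v ψ₁ xs ∪ bfVals v ψ₂ xs
  | _, .all _, _ => ∅

lemma bfVals_finite {α M : Type*} [L.Structure M] (v : α → M) :
    ∀ {k : ℕ} (ψ : L.BoundedFormula α k) (xs : Fin k → M), (bfVals v ψ xs).Finite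
  | _, .falsum, _ => Set.finite_empty
  | _, .equal t₁ t₂, _ => (termVals_finite _ t₁).union (termVals_finite _ t₂)
  | _, .rel _ _, _ => Set.finite_iUnion fun _ => termVals_finite _ _
  | _, .imp ψ₁ ψ₂, xs => (bfVals_finite v ψ₁ xs).union (bfVals_finite v ψ₂ xs)
  | _, .all _, _ => Set.finite_empty

/-- Function symbols occurring in a term. -/
def termFuncs {γ : Type*} : L.Term γ → Set (Σ n, L.Functions n)
  | .var _ => ∅
  | .func f ts => insert ⟨_, f⟩ (⋃ i, termFuncs (ts i))

lemma termFuncs_finite {γ : Type*} (t : L.Term γ) : (termFuncs t).Finite := by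
  induction t with
  | var i => exact Set.finite_empty
  | func f ts ih => exact (Set.finite_iUnion ih).insert _

/-- Function symbols occurring in a bounded formula. -/
def bfFuncs {α : Type*} : ∀ {k : ℕ}, L.BoundedFormula α k → Set (Σ n, L.Functions n)
  | _, .falsum => ∅
  | _, .equal t₁ t₂ => termFuncs t₁ ∪ termFuncs t₂
  | _, .rel _ ts => ⋃ i, termFuncs (ts i)
  | _, .imp ψ₁ ψ₂ => bfFuncs ψ₁ ∪ bfFuncs ψ₂
  | _, .all _ => ∅

lemma bfFuncs_finite {α : Type*} : ∀ {k : ℕ} (ψ : L.BoundedFormula α k), (bfFuncs ψ).Finite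
  | _, .falsum => Set.finite_empty
  | _, .equal t₁ t₂ => (termFuncs_finite t₁).union (termFuncs_finite t₂)
  | _, .rel _ _ => Set.finite_iUnion fun _ => termFuncs_finite _
  | _, .imp ψ₁ ψ₂ => (bfFuncs_finite ψ₁).union (bfFuncs_finite ψ₂)
  | _, .all _ => Set.finite_empty

/-- Relation symbols occurring in a bounded formula. -/
def bfRels {α : Type*} : ∀ {k : ℕ}, L.BoundedFormula α k → Set (Σ n, L.Relations n)
  | _, .falsum => ∅
  | _, .equal _ _ => ∅
  | _, .rel R _ => {⟨_, R⟩}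
  | _, .imp ψ₁ ψ₂ => bfRels ψ₁ ∪ bfRels ψ₂
  | _, .all _ => ∅

lemma bfRels_finite {α : Type*} : ∀ {k : ℕ} (ψ : L.BoundedFormula α k), (bfRels ψ).Finite
  | _, .falsum => Set.finite_empty
  | _, .equal _ _ => Set.finite_empty
  | _, .rel _ _ => Set.finite_singleton _
  | _, .imp ψ₁ ψ₂ => (bfRels_finite ψ₁).union (bfRels_finite ψ₂)
  | _, .all _ => Set.finite_empty

/-- The symbols of a flat formula lie in given sets of relation/function symbols. -/
def FlatFormula.SymbIn {V' : Type*} (SR : Set (Σ n, L.Relations n))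
    (SF : Set (Σ n, L.Functions n)) : FlatFormula L V' → Prop
  | .rel R _ _ => (⟨_, R⟩ : Σ n, L.Relations n) ∈ SR
  | .func f _ _ => (⟨_, f⟩ : Σ n, L.Functions n) ∈ SF

lemma flat_symbIn_finite {V' : Type*} [Finite V'] {SR : Set (Σ n, L.Relations n)}
    {SF : Set (Σ n, L.Functions n)} (hSR : SR.Finite) (hSF : SF.Finite) :
    {ψ : FlatFormula L V' | ψ.SymbIn SR SF}.Finite := by
  have hsub : {ψ : FlatFormula L V' | ψ.SymbIn SR SF} ⊆
      (⋃ s ∈ SR, Set.range fun p : (Fin s.1 → V') × Bool => FlatFormula.rel s.2 p.1 p.2) ∪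
      (⋃ s ∈ SF, Set.range fun p : (Fin s.1 → V') × V' => FlatFormula.func s.2 p.1 p.2) := by
    intro ψ hψ
    cases ψ with
    | rel R z pos =>
        exact Or.inl (Set.mem_biUnion hψ ⟨(z, pos), rfl⟩)
    | func f z z' =>
        exact Or.inr (Set.mem_biUnion hψ ⟨(z, z'), rfl⟩)
  exact ((hSR.biUnion fun s _ => Set.finite_range _).union
    (hSF.biUnion fun s _ => Set.finite_range _)).subset hsub

end AuxFlat

/-- If an `L`-structure `A` is not existentially closed, then there are
a tuple `ā` of pairwise distinct elements of `A` and an extension diagram `Δ` in `(x̄, ȳ)`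
such that `A ⊨ ¬ ∃ ȳ φ_Δ(ā, ȳ)`. -/
theorem not_existentiallyClosed_extensionDiagram (L : FirstOrder.Language.{v, w})
    (A : Type u) [L.Structure A] (hA : ¬ IsExistentiallyClosed L A) :
    ∃ (m n : ℕ) (a : Fin m → A), Function.Injective a ∧
      ∃ Δ : Set (FlatFormula L (Fin m ⊕ Fin n)), IsExtensionDiagram Δ ∧
        ¬ ∃ b : Fin n → A, RealizesExtDiagram Δ a b := by
  classical
  rw [IsExistentiallyClosed] at hA
  push_neg at hA
  obtain ⟨B, _inst, g, m₀, n₀, φ, hQF, a₀, ⟨b₀, hb₀⟩, hnA⟩ := hA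
  -- the assignment in B realizing φ
  set f : (Fin m₀ ⊕ Fin n₀) → B := Sum.elim (fun i => g (a₀ i)) b₀ with hf
  -- the finite set of relevant elements of B
  set C : Set B := Set.range f ∪ bfVals f φ default with hC
  have hCfin : C.Finite := (Set.finite_range f).union (bfVals_finite f φ default)
  have hrangeC : ∀ w, f w ∈ C := fun w => Set.mem_union_left _ ⟨w, rfl⟩
  have hφvals : bfVals f φ default ⊆ C := Set.subset_union_right
  set CA : Set B := C ∩ Set.range ⇑g with hCAdef
  set CB : Set B := C \ Set.range ⇑g with hCBdef
  have hCAfin : CA.Finite := hCfin.inter_of_left _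
  have hCBfin : CB.Finite := hCfin.subset Set.diff_subset
  haveI := hCAfin.fintype
  haveI := hCBfin.fintype
  refine ⟨Fintype.card CA, Fintype.card CB, ?_⟩
  set m := Fintype.card CA
  set n := Fintype.card CB
  let eA : CA ≃ Fin m := Fintype.equivFin CA
  let eB : CB ≃ Fin n := Fintype.equivFin CB
  have ha' : ∀ i : Fin m, ∃ x : A, g x = ↑(eA.symm i) := fun i => (eA.symm i).2.2
  choose a ha using ha'
  have hainj : Function.Injective a := by
    intro i j hij
    have : ((eA.symm i : CA) : B) = ((eA.symm j : CA) : B) := by rw [← ha, ← ha, hij]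
    exact eA.symm.injective (Subtype.coe_injective this)
  set ι : Fin m ⊕ Fin n → B := Sum.elim (fun i => g (a i)) (fun j => ↑(eB.symm j)) with hι
  set π : C → Fin m ⊕ Fin n := fun x =>
    if h : (x : B) ∈ Set.range ⇑g then Sum.inl (eA ⟨x, x.2, h⟩)
    else Sum.inr (eB ⟨x, x.2, h⟩) with hπ
  have hπι : ∀ x : C, ι (π x) = x := by
    intro x
    by_cases h : (x : B) ∈ Set.range ⇑g
    · simp only [hπ, dif_pos h, hι, Sum.elim_inl, ha, Equiv.symm_apply_apply]
    · simp only [hπ, dif_neg h, hι, Sum.elim_inr, Equiv.symm_apply_apply]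
  have hιinj : Function.Injective ι := by
    rintro (i | i) (j | j) hij <;> simp only [hι, Sum.elim_inl, Sum.elim_inr] at hij
    · exact congrArg Sum.inl (hainj (g.injective hij))
    · exact absurd ⟨a i, hij⟩ (eB.symm j).2.2
    · exact absurd ⟨a j, hij.symm⟩ (eB.symm i).2.2
    · exact congrArg Sum.inr (eB.symm.injective (Subtype.coe_injective hij))
  have hπinj : Function.Injective π := by
    intro x y h
    have := congrArg ι h
    rw [hπι, hπι] at this
    exact Subtype.coe_injective this
  have hπval : ∀ (x : C) (i : Fin m), π x = Sum.inl i → (x : B) = g (a i) := by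
    intro x i h
    have := hπι x
    rw [h] at this
    exact this.symm
  have hπinlEx : ∀ (x : C), (x : B) ∈ Set.range ⇑g → ∃ i, π x = Sum.inl i := by
    intro x hx
    exact ⟨eA ⟨x, x.2, hx⟩, by simp only [hπ, dif_pos hx]⟩
  -- the extension diagram
  set Δ : Set (FlatFormula L (Fin m ⊕ Fin n)) :=
    {ψ | ψ.Realize ι ∧ ψ.MentionsRight ∧ ψ.SymbIn (bfRels φ) (bfFuncs φ)} with hΔ
  refine ⟨a, hainj, Δ, ⟨?_, ⟨?_, ?_⟩, fun ψ h => h.2.1⟩, ?_⟩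
  · exact (flat_symbIn_finite (bfRels_finite φ) (bfFuncs_finite φ)).subset fun ψ h => h.2.2
  · rintro n' R z ⟨h₁, h₂⟩
    have r₁ := h₁.1
    have r₂ := h₂.1
    simp only [FlatFormula.Realize] at r₁ r₂
    exact absurd (r₂.mp (r₁.mpr trivial)) Bool.false_ne_true
  · intro n' fS z z₁ z₂ h₁ h₂
    exact hιinj ((h₁.1).symm.trans h₂.1)
  -- main part: if A realized Δ, then A would realize ∃ ȳ φ
  rintro ⟨b, hsat, heinj⟩
  set e : Fin m ⊕ Fin n → A := Sum.elim a b with he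
  set F : (Fin m₀ ⊕ Fin n₀) ⊕ Fin 0 → B := Sum.elim f default with hFdef
  have hF : ∀ w, F w ∈ C := by
    rintro (w | w)
    · exact hrangeC w
    · exact w.elim0
  set G : (Fin m₀ ⊕ Fin n₀) ⊕ Fin 0 → A := fun w => e (π ⟨F w, hF w⟩) with hG
  -- key term lemma
  have termkey : ∀ t : L.Term ((Fin m₀ ⊕ Fin n₀) ⊕ Fin 0), termVals F t ⊆ C →
      termFuncs t ⊆ bfFuncs φ →
      ∀ h : t.realize F ∈ C, t.realize G = e (π ⟨t.realize F, h⟩) := by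
    intro t
    induction t with
    | var w => intro _ _ h; rfl
    | func fS ts ih =>
      intro hvals hfuncs h
      have hts : ∀ i, termVals F (ts i) ⊆ C := fun i =>
        Set.Subset.trans (Set.Subset.trans (Set.subset_iUnion (fun j => termVals F (ts j)) i)
          (Set.subset_insert _ _)) hvals
      have htsf : ∀ i, termFuncs (ts i) ⊆ bfFuncs φ := fun i =>
        Set.Subset.trans (Set.Subset.trans (Set.subset_iUnion (fun j => termFuncs (ts j)) i)
          (Set.subset_insert _ _)) hfuncs
      have hmem : ∀ i, (ts i).realize F ∈ C := fun i => hts i (realize_mem_termVals F (ts i))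
      have hval : Structure.funMap fS (fun i => (ts i).realize F) ∈ C := h
      set vι : Fin _ → C := fun i => ⟨(ts i).realize F, hmem i⟩ with hvι
      have hreal : Term.realize G (.func fS ts) =
          Structure.funMap fS (fun i => e (π (vι i))) := by
        show Structure.funMap fS (fun i => (ts i).realize G) = _
        congr 1
        funext i
        exact ih i (hts i) (htsf i) (hmem i)
      rw [hreal]
      by_cases hre : ∃ i, (π (vι i)).isRight
      · -- the flat formula is in Δ
        have hmemΔ : FlatFormula.func fS (fun i => π (vι i)) (π ⟨_, hval⟩) ∈ Δ := by
          refine ⟨?_, hre, hfuncs (Set.mem_insert _ _)⟩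
          show Structure.funMap fS (fun i => ι (π (vι i))) = ι (π ⟨_, hval⟩)
          simp only [hπι]
          rfl
        exact hsat _ hmemΔ
      · push_neg at hre
        have hleft : ∀ i, ∃ k, π (vι i) = Sum.inl k := by
          intro i
          rcases hk : π (vι i) with k | k
          · exact ⟨k, rfl⟩
          · exact absurd (by rw [hk]; rfl) (hre i)
        choose k hk using hleft
        have hvg : ∀ i, (ts i).realize F = g (a (k i)) := fun i => hπval _ _ (hk i)
        have hvalg : Structure.funMap fS (fun i => (ts i).realize F) =
            g (Structure.funMap fS (a ∘ k)) := by
          rw [g.map_fun]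
          congr 1
          funext i
          exact hvg i
        obtain ⟨k', hk'⟩ := hπinlEx ⟨_, hval⟩ ⟨_, hvalg.symm⟩
        have hk'v : g (Structure.funMap fS (a ∘ k)) = g (a k') := by
          rw [← hvalg]
          exact hπval _ _ hk'
        have heq : Structure.funMap fS (fun i => e (π (vι i))) = a k' := by
          have h1 : (fun i => e (π (vι i))) = a ∘ k := by
            funext i; rw [hk i]; rfl
          rw [h1, ← g.injective hk'v]
        rw [heq]
        show a k' = e (π ⟨Structure.funMap fS fun i => Term.realize F (ts i), hval⟩)
        rw [hk']
        rfl
  have hsub : Sum.elim (fun w => G (Sum.inl w)) (default : Fin 0 → A) = G := by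
    funext w
    rcases w with w | w
    · rfl
    · exact w.elim0
  -- key formula lemma
  have fmlkey : ∀ ψ : L.BoundedFormula (Fin m₀ ⊕ Fin n₀) 0, ψ.IsQF →
      bfVals f ψ default ⊆ C → bfFuncs ψ ⊆ bfFuncs φ → bfRels ψ ⊆ bfRels φ →
      (ψ.Realize (fun w => G (Sum.inl w)) default ↔ ψ.Realize f default) := by
    intro ψ hψ
    induction hψ with
    | falsum => intro _ _ _; exact Iff.rfl
    | @of_isAtomic ψ hatom =>
      cases hatom with
      | equal t₁ t₂ =>
        intro hv hfn _
        have hv₁ : termVals F t₁ ⊆ C := Set.Subset.trans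
          (show termVals F t₁ ⊆ bfVals f (t₁.bdEqual t₂) default from Set.subset_union_left) hv
        have hv₂ : termVals F t₂ ⊆ C := Set.Subset.trans
          (show termVals F t₂ ⊆ bfVals f (t₁.bdEqual t₂) default from Set.subset_union_right) hv
        have hf₁ : termFuncs t₁ ⊆ bfFuncs φ := Set.Subset.trans
          (show termFuncs t₁ ⊆ bfFuncs (t₁.bdEqual t₂) from Set.subset_union_left) hfn
        have hf₂ : termFuncs t₂ ⊆ bfFuncs φ := Set.Subset.trans
          (show termFuncs t₂ ⊆ bfFuncs (t₁.bdEqual t₂) from Set.subset_union_right) hfn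
        have hm₁ := hv₁ (realize_mem_termVals F t₁)
        have hm₂ := hv₂ (realize_mem_termVals F t₂)
        rw [BoundedFormula.realize_bdEqual, BoundedFormula.realize_bdEqual, hsub, ← hFdef,
          termkey t₁ hv₁ hf₁ hm₁, termkey t₂ hv₂ hf₂ hm₂]
        constructor
        · intro hh
          exact congrArg Subtype.val (hπinj (heinj hh))
        · intro hh
          exact congrArg (fun x => e (π x)) (Subtype.ext hh)
      | @rel l R ts =>
        intro hv hfn hr
        have hvts : ∀ i, termVals F (ts i) ⊆ C := fun i => Set.Subset.trans
          (Set.subset_iUnion (fun j => termVals F (ts j)) i) hv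
        have hfts : ∀ i, termFuncs (ts i) ⊆ bfFuncs φ := fun i => Set.Subset.trans
          (Set.subset_iUnion (fun j => termFuncs (ts j)) i) hfn
        have hmem : ∀ i, (ts i).realize F ∈ C := fun i => hvts i (realize_mem_termVals F (ts i))
        set vι : Fin l → C := fun i => ⟨(ts i).realize F, hmem i⟩ with hvι
        have hRmem : (⟨l, R⟩ : Σ k, L.Relations k) ∈ bfRels φ := hr rfl
        rw [BoundedFormula.realize_rel, BoundedFormula.realize_rel, hsub, ← hFdef]
        have htk : (fun i => (ts i).realize G) = fun i => e (π (vι i)) := by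
          funext i
          exact termkey (ts i) (hvts i) (hfts i) (hmem i)
        rw [htk]
        by_cases hre : ∃ i, (π (vι i)).isRight
        · have hmemΔ : FlatFormula.rel R (fun i => π (vι i))
              (decide (Structure.RelMap R fun i => (ts i).realize F)) ∈ Δ := by
            refine ⟨?_, hre, hRmem⟩
            show Structure.RelMap R (fun i => ι (π (vι i))) ↔ _
            have hh : (fun i => ι (π (vι i))) = fun i => (ts i).realize F := by
              funext i; rw [hπι]
            rw [hh, decide_eq_true_iff]
          have := hsat _ hmemΔ
          simp only [FlatFormula.Realize, decide_eq_true_iff] at this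
          exact this
        · push_neg at hre
          have hleft : ∀ i, ∃ k, π (vι i) = Sum.inl k := by
            intro i
            rcases hk : π (vι i) with k | k
            · exact ⟨k, rfl⟩
            · exact absurd (by rw [hk]; rfl) (hre i)
          choose k hk using hleft
          have h1 : (fun i => e (π (vι i))) = a ∘ k := by
            funext i; rw [hk i]; rfl
          have h2 : (fun i => (ts i).realize F) = ⇑g ∘ (a ∘ k) := by
            funext i
            exact hπval _ _ (hk i)
          rw [h1, h2, g.map_rel]
    | imp h₁ h₂ ih₁ ih₂ =>
      intro hv hfn hr
      rw [BoundedFormula.realize_imp, BoundedFormula.realize_imp,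
        ih₁ (Set.Subset.trans Set.subset_union_left hv)
          (Set.Subset.trans Set.subset_union_left hfn)
          (Set.Subset.trans Set.subset_union_left hr),
        ih₂ (Set.Subset.trans Set.subset_union_right hv)
          (Set.Subset.trans Set.subset_union_right hfn)
          (Set.Subset.trans Set.subset_union_right hr)]
  -- conclude
  set b' : Fin n₀ → A := fun j => G (Sum.inl (Sum.inr j)) with hb'
  have hab : Sum.elim a₀ b' = fun w => G (Sum.inl w) := by
    funext w
    rcases w with i | j
    · obtain ⟨k', hk'⟩ := hπinlEx ⟨F (Sum.inl (Sum.inl i)), hF _⟩ ⟨a₀ i, rfl⟩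
      have hgg : g (a₀ i) = g (a k') := hπval _ _ hk'
      have hk'' : a₀ i = a k' := g.injective hgg
      show a₀ i = e (π ⟨F (Sum.inl (Sum.inl i)), _⟩)
      rw [hk', hk'']
      rfl
    · rfl
  have hfin : φ.Realize (Sum.elim a₀ b') := by
    show BoundedFormula.Realize φ (Sum.elim a₀ b') default
    rw [hab]
    exact (fmlkey φ hQF hφvals (subset_refl _) (subset_refl _)).mpr hb₀
  exact hnA b' hfin
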